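/- Let μ be an idempotent probability measure (μ*μ = μ) on a finite semigroup S, with support K = 𝒮(μ) completely simple, e an idempotent of K, and Rees decomposition K = LGR at e. Then the pushforward of μ under the G-coordinate map z ↦ eze is the uniform (Haar) probability on the group G = eKe. -/

import Mathlib

open scoped Classical

/-- Convolution of two probability mass functions on a finite semigroup. -/
noncomputable def semigroupConv {S : Type*} [Semigroup S] [Fintype S]
    (μ ν : S → ℝ) : S → ℝ :=
  fun x => ∑ f : S, ∑ g : S, if f * g = x then μ f * ν g else 0

open Finset
namespace Stmt11Aux
variable {S : Type*} [Semigroup S] [Fintype S]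

lemma ite_nonneg' {p : Prop} [Decidable p] {a : ℝ} (h : 0 ≤ a) : 0 ≤ if p then a else 0 := by
  split_ifs <;> simp [h]

lemma hconv (μ : S → ℝ) (hidem : semigroupConv μ μ = μ) (z : S) :
    μ z = ∑ f : S, ∑ g : S, if f * g = z then μ f * μ g else 0 :=
  (congrFun hidem z).symm

lemma supp_mul (μ : S → ℝ) (hμ0 : ∀ s, 0 ≤ μ s) (hidem : semigroupConv μ μ = μ)
    {x y : S} (hx : 0 < μ x) (hy : 0 < μ y) : 0 < μ (x * y) := by
  have h := hconv μ hidem (x * y)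
  have h2 : μ x * μ y ≤ ∑ f : S, ∑ g : S, if f * g = x * y then μ f * μ g else 0 := by
    have h3 : μ x * μ y ≤ ∑ g : S, if x * g = x * y then μ x * μ g else 0 := by
      have := Finset.single_le_sum (f := fun g => if x * g = x * y then μ x * μ g else 0)
        (fun g _ => ite_nonneg' (mul_nonneg (hμ0 x) (hμ0 g))) (Finset.mem_univ y)
      simpa using this
    refine le_trans h3 ?_
    exact Finset.single_le_sum (f := fun f => ∑ g : S, if f * g = x * y then μ f * μ g else 0)
      (fun f _ => Finset.sum_nonneg fun g _ => ite_nonneg' (mul_nonneg (hμ0 f) (hμ0 g)))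
      (Finset.mem_univ x)
  have := mul_pos hx hy
  linarith [h2, h ▸ h2]

/-- Simplicity of the support: `K k K = K`. -/
lemma simple (μ : S → ℝ) (hμ0 : ∀ s, 0 ≤ μ s) (hμ1 : ∑ s : S, μ s = 1)
    (hidem : semigroupConv μ μ = μ)
    {k z : S} (hk : 0 < μ k) (hz : 0 < μ z) :
    ∃ a b, 0 < μ a ∧ 0 < μ b ∧ a * k * b = z := by
  by_contra hcon
  push_neg at hcon
  set I : Finset S := Finset.univ.filter (fun w => ∃ a b, 0 < μ a ∧ 0 < μ b ∧ a * k * b = w) with hI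
  have hmemI : ∀ w : S, w ∈ I ↔ ∃ a b, 0 < μ a ∧ 0 < μ b ∧ a * k * b = w := by
    intro w; simp [hI]
  set t : ℝ := ∑ w ∈ I, μ w with ht
  -- ideal property: if f ∈ I and μ g > 0 then f*g ∈ I, and symmetrically
  have hIr : ∀ f g : S, f ∈ I → 0 < μ g → f * g ∈ I := by
    intro f g hf hg
    obtain ⟨a, b, ha, hb, hab⟩ := (hmemI f).mp hf
    exact (hmemI _).mpr ⟨a, b * g, ha, supp_mul μ hμ0 hidem hb hg, by
      rw [← hab]; simp [mul_assoc]⟩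
  have hIl : ∀ f g : S, g ∈ I → 0 < μ f → f * g ∈ I := by
    intro f g hg hf
    obtain ⟨a, b, ha, hb, hab⟩ := (hmemI g).mp hg
    exact (hmemI _).mpr ⟨f * a, b, supp_mul μ hμ0 hidem hf ha, hb, by
      rw [← hab]; simp [mul_assoc]⟩
  -- t as a double sum
  have hteq : t = ∑ f : S, ∑ g : S, (if f * g ∈ I then μ f * μ g else 0) := by
    rw [ht]
    calc ∑ w ∈ I, μ w = ∑ w ∈ I, ∑ f : S, ∑ g : S, (if f * g = w then μ f * μ g else 0) := by
          exact Finset.sum_congr rfl fun w _ => hconv μ hidem w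
      _ = ∑ f : S, ∑ w ∈ I, ∑ g : S, (if f * g = w then μ f * μ g else 0) := Finset.sum_comm
      _ = ∑ f : S, ∑ g : S, ∑ w ∈ I, (if f * g = w then μ f * μ g else 0) := by
          exact Finset.sum_congr rfl fun f _ => Finset.sum_comm
      _ = ∑ f : S, ∑ g : S, (if f * g ∈ I then μ f * μ g else 0) := by
          refine Finset.sum_congr rfl fun f _ => Finset.sum_congr rfl fun g _ => ?_
          exact Finset.sum_ite_eq I (f * g) (fun _ => μ f * μ g)
  -- lower bound termwise
  have hbound : ∀ f g : S,
      (if f ∈ I then μ f * μ g else 0) + (if g ∈ I then μ f * μ g else 0)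
        - (if f ∈ I then (if g ∈ I then μ f * μ g else 0) else 0)
      ≤ (if f * g ∈ I then μ f * μ g else 0) := by
    intro f g
    have hfg0 : 0 ≤ μ f * μ g := mul_nonneg (hμ0 f) (hμ0 g)
    rcases eq_or_lt_of_le (hμ0 f) with hf0 | hf
    · simp [← hf0, ite_nonneg', hfg0]
    rcases eq_or_lt_of_le (hμ0 g) with hg0 | hg
    · simp [← hg0, ite_nonneg', hfg0]
    by_cases hfI : f ∈ I
    · have : f * g ∈ I := hIr f g hfI hg
      by_cases hgI : g ∈ I <;> simp [hfI, hgI, this]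
    · by_cases hgI : g ∈ I
      · have : f * g ∈ I := hIl f g hgI hf
        simp [hfI, hgI, this]
      · simp [hfI, hgI, ite_nonneg', hfg0]
  -- sum the lower bound
  have hsum1 : (∑ f : S, ∑ g : S, (if f ∈ I then μ f * μ g else 0)) = t := by
    have : ∀ f : S, (∑ g : S, (if f ∈ I then μ f * μ g else 0)) = (if f ∈ I then μ f else 0) := by
      intro f
      by_cases hf : f ∈ I
      · simp [hf, ← Finset.mul_sum, hμ1]
      · simp [hf]
    rw [Finset.sum_congr rfl fun f _ => this f, ht, Finset.sum_filter]
    simp [hI]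
  have hsum2 : (∑ f : S, ∑ g : S, (if g ∈ I then μ f * μ g else 0)) = t := by
    rw [Finset.sum_comm]
    have : ∀ g : S, (∑ f : S, (if g ∈ I then μ f * μ g else 0)) = (if g ∈ I then μ g else 0) := by
      intro g
      by_cases hg : g ∈ I
      · simp [hg, ← Finset.sum_mul, hμ1]
      · simp [hg]
    rw [Finset.sum_congr rfl fun g _ => this g, ht, Finset.sum_filter]
    simp [hI]
  have hsum3 : (∑ f : S, ∑ g : S, (if f ∈ I then (if g ∈ I then μ f * μ g else 0) else 0)) = t * t := by
    have hinner : ∀ f : S, (∑ g : S, (if f ∈ I then (if g ∈ I then μ f * μ g else 0) else 0))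
        = (if f ∈ I then μ f else 0) * t := by
      intro f
      by_cases hf : f ∈ I
      · simp only [hf, if_true]
        rw [Finset.sum_ite_mem, Finset.univ_inter, ← Finset.mul_sum, ← ht]
      · simp [hf]
    rw [Finset.sum_congr rfl fun f _ => hinner f, ← Finset.sum_mul]
    congr 1
    rw [Finset.sum_ite_mem, Finset.univ_inter, ← ht]
  have hineq : t + t - t * t ≤ t := by
    have hle : (∑ f : S, ∑ g : S,
        ((if f ∈ I then μ f * μ g else 0) + (if g ∈ I then μ f * μ g else 0)
          - (if f ∈ I then (if g ∈ I then μ f * μ g else 0) else 0)))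
        ≤ ∑ f : S, ∑ g : S, (if f * g ∈ I then μ f * μ g else 0) := by
      refine Finset.sum_le_sum fun f _ => Finset.sum_le_sum fun g _ => hbound f g
    calc t + t - t * t
        = ∑ f : S, ∑ g : S,
            ((if f ∈ I then μ f * μ g else 0) + (if g ∈ I then μ f * μ g else 0)
              - (if f ∈ I then (if g ∈ I then μ f * μ g else 0) else 0)) := by
          simp only [Finset.sum_sub_distrib, Finset.sum_add_distrib]
          rw [hsum1, hsum2, hsum3]
      _ ≤ ∑ f : S, ∑ g : S, (if f * g ∈ I then μ f * μ g else 0) := hle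
      _ = t := hteq.symm
  -- t > 0
  have hk3 : k * k * k ∈ I := (hmemI _).mpr ⟨k, k, hk, hk, rfl⟩
  have htpos : 0 < t := by
    rw [ht]
    have : 0 < μ (k * k * k) :=
      supp_mul μ hμ0 hidem (supp_mul μ hμ0 hidem hk hk) hk
    have hle : μ (k * k * k) ≤ t := by
      rw [ht]; exact Finset.single_le_sum (fun w _ => hμ0 w) hk3
    linarith
  have ht1 : 1 ≤ t := by nlinarith
  -- z ∉ I but μ z > 0 : contradiction
  have hzI : z ∉ I := by
    intro hzmem
    obtain ⟨a, b, ha, hb, hab⟩ := (hmemI z).mp hzmem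
    exact hcon a b ha hb hab
  have : t + μ z ≤ 1 := by
    have hsub : insert z I ⊆ Finset.univ := Finset.subset_univ _
    have := Finset.sum_le_sum_of_subset_of_nonneg hsub (fun w _ _ => hμ0 w)
    rw [Finset.sum_insert hzI, hμ1] at this
    linarith [this]
  linarith

/-- Key reindexing: expand one `μ` factor using idempotence. -/
lemma sum_mu_eq (μ : S → ℝ) (hidem : semigroupConv μ μ = μ) (F : S → ℝ) :
    (∑ s : S, μ s * F s) = ∑ p : S, ∑ q : S, μ p * μ q * F (p * q) := by
  calc ∑ s : S, μ s * F s
      = ∑ s : S, (∑ p : S, ∑ q : S, if p * q = s then μ p * μ q else 0) * F s := by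
        refine Finset.sum_congr rfl fun s _ => ?_
        rw [← hconv μ hidem s]
    _ = ∑ s : S, ∑ p : S, ∑ q : S, (if p * q = s then μ p * μ q * F s else 0) := by
        refine Finset.sum_congr rfl fun s _ => ?_
        rw [Finset.sum_mul]
        refine Finset.sum_congr rfl fun p _ => ?_
        rw [Finset.sum_mul]
        refine Finset.sum_congr rfl fun q _ => ?_
        split_ifs <;> simp
    _ = ∑ p : S, ∑ s : S, ∑ q : S, (if p * q = s then μ p * μ q * F s else 0) :=
        Finset.sum_comm
    _ = ∑ p : S, ∑ q : S, ∑ s : S, (if p * q = s then μ p * μ q * F s else 0) := by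
        exact Finset.sum_congr rfl fun p _ => Finset.sum_comm
    _ = ∑ p : S, ∑ q : S, μ p * μ q * F (p * q) := by
        refine Finset.sum_congr rfl fun p _ => Finset.sum_congr rfl fun q _ => ?_
        have : ∀ s : S, (if p * q = s then μ p * μ q * F s else 0)
            = (if p * q = s then μ p * μ q * F (p * q) else 0) := by
          intro s; split_ifs with h
          · rw [h]
          · rfl
        rw [Finset.sum_congr rfl fun s _ => this s]
        simpa using Finset.sum_ite_eq Finset.univ (p * q) (fun s => μ p * μ q * F (p * q))

noncomputable def Pker (μ : S → ℝ) (k z : S) : ℝ :=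
  ∑ x : S, ∑ y : S, if x * k * y = z then μ x * μ y else 0

lemma Pker_nonneg (μ : S → ℝ) (hμ0 : ∀ s, 0 ≤ μ s) (k z : S) : 0 ≤ Pker μ k z :=
  Finset.sum_nonneg fun x _ => Finset.sum_nonneg fun y _ =>
    ite_nonneg' (mul_nonneg (hμ0 x) (hμ0 y))

lemma Pker_expand (μ : S → ℝ) (hidem : semigroupConv μ μ = μ) (k z : S) :
    Pker μ k z = ∑ a : S, ∑ b : S, μ a * μ b * Pker μ (a * k * b) z := by
  have step1 : Pker μ k z
      = ∑ x' : S, μ x' * (∑ y : S, if x' * k * y = z then μ y else 0) := by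
    unfold Pker
    refine Finset.sum_congr rfl fun x' _ => ?_
    rw [Finset.mul_sum]
    refine Finset.sum_congr rfl fun y _ => ?_
    split_ifs <;> simp
  have step2 : Pker μ k z
      = ∑ x : S, ∑ a : S, μ x * μ a * (∑ y : S, if (x * a) * k * y = z then μ y else 0) := by
    rw [step1, sum_mu_eq μ hidem (fun u => ∑ y : S, if u * k * y = z then μ y else 0)]
  have step3 : ∀ u : S, (∑ y : S, if u * k * y = z then μ y else 0)
      = ∑ b : S, ∑ y : S, μ b * μ y * (if u * k * (b * y) = z then (1:ℝ) else 0) := by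
    intro u
    have : (∑ y : S, if u * k * y = z then μ y else 0)
        = ∑ y : S, μ y * (if u * k * y = z then (1:ℝ) else 0) := by
      refine Finset.sum_congr rfl fun y _ => ?_
      split_ifs <;> simp
    rw [this, sum_mu_eq μ hidem (fun y => if u * k * y = z then (1:ℝ) else 0)]
  -- both sides as a canonical quadruple sum
  have lhs : Pker μ k z = ∑ x : S, ∑ a : S, ∑ b : S, ∑ y : S,
      (if x * (a * (k * (b * y))) = z then μ x * μ a * (μ b * μ y) else 0) := by
    rw [step2]
    refine Finset.sum_congr rfl fun x _ => Finset.sum_congr rfl fun a _ => ?_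
    rw [step3, Finset.mul_sum]
    refine Finset.sum_congr rfl fun b _ => ?_
    rw [Finset.mul_sum]
    refine Finset.sum_congr rfl fun y _ => ?_
    simp only [mul_assoc]
    split_ifs <;> ring
  have rhs : (∑ a : S, ∑ b : S, μ a * μ b * Pker μ (a * k * b) z)
      = ∑ a : S, ∑ b : S, ∑ x : S, ∑ y : S,
        (if x * (a * (k * (b * y))) = z then μ x * μ a * (μ b * μ y) else 0) := by
    refine Finset.sum_congr rfl fun a _ => Finset.sum_congr rfl fun b _ => ?_
    unfold Pker
    rw [Finset.mul_sum]
    refine Finset.sum_congr rfl fun x _ => ?_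
    rw [Finset.mul_sum]
    refine Finset.sum_congr rfl fun y _ => ?_
    simp only [mul_assoc]
    split_ifs <;> ring
  rw [lhs, rhs]
  -- reorder sums: (x a b y) vs (a b x y)
  rw [Finset.sum_comm]
  refine Finset.sum_congr rfl fun a _ => ?_
  rw [Finset.sum_comm]


lemma Pker_const (μ : S → ℝ) (hμ0 : ∀ s, 0 ≤ μ s) (hμ1 : ∑ s : S, μ s = 1)
    (hidem : semigroupConv μ μ = μ) (z : S)
    {k k' : S} (hk : 0 < μ k) (hk' : 0 < μ k') :
    Pker μ k z = Pker μ k' z := by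
  set Kf : Finset S := Finset.univ.filter (fun w => 0 < μ w) with hKf
  have hmemK : ∀ w : S, w ∈ Kf ↔ 0 < μ w := by intro w; simp [hKf]
  obtain ⟨k0, hk0K, hmax⟩ := Finset.exists_max_image Kf (fun w => Pker μ w z) ⟨k, (hmemK k).mpr hk⟩
  have hk0 : 0 < μ k0 := (hmemK k0).mp hk0K
  -- equality case of the expansion at k0
  have hexp := Pker_expand μ hidem k0 z
  have hexp' : Pker μ k0 z
      = ∑ p ∈ Finset.univ ×ˢ Finset.univ,
          μ (Prod.fst p) * μ (Prod.snd p) * Pker μ (Prod.fst p * k0 * Prod.snd p) z := by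
    rw [hexp, Finset.sum_product]
  have hgsum : (∑ p ∈ Finset.univ ×ˢ (Finset.univ : Finset S),
      μ (Prod.fst p) * μ (Prod.snd p) * Pker μ k0 z) = Pker μ k0 z := by
    rw [Finset.sum_product]
    have : ∀ a : S, (∑ b : S, μ a * μ b * Pker μ k0 z) = μ a * Pker μ k0 z := by
      intro a
      rw [← Finset.sum_mul, ← Finset.mul_sum, hμ1, mul_one]
    rw [Finset.sum_congr rfl fun a _ => this a, ← Finset.sum_mul, hμ1, one_mul]
  have hle : ∀ p ∈ Finset.univ ×ˢ (Finset.univ : Finset S),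
      μ (Prod.fst p) * μ (Prod.snd p) * Pker μ (Prod.fst p * k0 * Prod.snd p) z
        ≤ μ (Prod.fst p) * μ (Prod.snd p) * Pker μ k0 z := by
    rintro ⟨a, b⟩ _
    simp only
    rcases eq_or_lt_of_le (hμ0 a) with ha | ha
    · simp [← ha]
    rcases eq_or_lt_of_le (hμ0 b) with hb | hb
    · simp [← hb]
    have hmem : a * k0 * b ∈ Kf := (hmemK _).mpr
      (supp_mul μ hμ0 hidem (supp_mul μ hμ0 hidem ha hk0) hb)
    exact mul_le_mul_of_nonneg_left (hmax _ hmem) (le_of_lt (mul_pos ha hb))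
  have heq : ∀ p ∈ Finset.univ ×ˢ (Finset.univ : Finset S),
      μ (Prod.fst p) * μ (Prod.snd p) * Pker μ (Prod.fst p * k0 * Prod.snd p) z
        = μ (Prod.fst p) * μ (Prod.snd p) * Pker μ k0 z := by
    apply (Finset.sum_eq_sum_iff_of_le hle).mp
    rw [← hexp', hgsum]
  have hconst : ∀ a b : S, 0 < μ a → 0 < μ b → Pker μ (a * k0 * b) z = Pker μ k0 z := by
    intro a b ha hb
    have := heq (a, b) (Finset.mem_product.mpr ⟨Finset.mem_univ a, Finset.mem_univ b⟩)
    simp only at this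
    exact mul_left_cancel₀ (ne_of_gt (mul_pos ha hb)) this
  have hall : ∀ w : S, 0 < μ w → Pker μ w z = Pker μ k0 z := by
    intro w hw
    obtain ⟨a, b, ha, hb, hab⟩ := simple μ hμ0 hμ1 hidem hk0 hw
    rw [← hab]
    exact hconst a b ha hb
  rw [hall k hk, hall k' hk']

lemma mu_eq_Pe (μ : S → ℝ) (hμ0 : ∀ s, 0 ≤ μ s) (hμ1 : ∑ s : S, μ s = 1)
    (hidem : semigroupConv μ μ = μ) {e : S} (heK : 0 < μ e) (z : S) :
    μ z = Pker μ e z := by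
  have step1 : μ z = ∑ f : S, μ f * (∑ y : S, if f * y = z then μ y else 0) := by
    rw [hconv μ hidem z]
    refine Finset.sum_congr rfl fun f _ => ?_
    rw [Finset.mul_sum]
    refine Finset.sum_congr rfl fun y _ => ?_
    split_ifs <;> simp
  have step2 : μ z = ∑ x : S, ∑ k : S, μ x * μ k * (∑ y : S, if (x * k) * y = z then μ y else 0) := by
    rw [step1, sum_mu_eq μ hidem (fun u => ∑ y : S, if u * y = z then μ y else 0)]
  -- identify with ∑ k μ k * Pker μ k z
  have step3 : μ z = ∑ k : S, μ k * Pker μ k z := by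
    rw [step2]
    rw [Finset.sum_comm]
    refine Finset.sum_congr rfl fun k _ => ?_
    unfold Pker
    rw [Finset.mul_sum]
    refine Finset.sum_congr rfl fun x _ => ?_
    rw [Finset.mul_sum, Finset.mul_sum]
    refine Finset.sum_congr rfl fun y _ => ?_
    have : x * k * y = (x * k) * y := rfl
    split_ifs <;> ring
  rw [step3]
  have hterm : ∀ k : S, μ k * Pker μ k z = μ k * Pker μ e z := by
    intro k
    rcases eq_or_lt_of_le (hμ0 k) with hk | hk
    · rw [← hk, zero_mul, zero_mul]
    · rw [Pker_const μ hμ0 hμ1 hidem z hk heK]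
  rw [Finset.sum_congr rfl fun k _ => hterm k, ← Finset.sum_mul, hμ1, one_mul]


noncomputable def nu (μ : S → ℝ) (e : S) (g : S) : ℝ :=
  ∑ z : S, if e * z * e = g then μ z else 0

lemma hmul_e {e : S} (he : e * e = e) (z w : S) :
    (e * z * e) * (e * w * e) = e * (z * e * w) * e := by
  have h1 : (e : S) * (e * (w * e)) = e * (w * e) := by rw [← mul_assoc, he]
  simp only [mul_assoc, h1]

lemma nu_idem (μ : S → ℝ) (hμ0 : ∀ s, 0 ≤ μ s) (hμ1 : ∑ s : S, μ s = 1)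
    (hidem : semigroupConv μ μ = μ) {e : S} (he : e * e = e) (heK : 0 < μ e) (g : S) :
    (∑ h : S, ∑ k : S, if h * k = g then nu μ e h * nu μ e k else 0) = nu μ e g := by
  have step1 : (∑ h : S, ∑ k : S, if h * k = g then nu μ e h * nu μ e k else 0)
      = ∑ h : S, ∑ k : S, ∑ z : S, ∑ w : S,
        (if e * z * e = h then (if e * w * e = k then (if h * k = g then μ z * μ w else 0) else 0) else 0) := by
    refine Finset.sum_congr rfl fun h _ => Finset.sum_congr rfl fun k _ => ?_
    by_cases hc : h * k = g
    · simp only [hc, if_pos rfl, if_true]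
      unfold nu
      rw [Finset.sum_mul_sum]
      refine Finset.sum_congr rfl fun z _ => Finset.sum_congr rfl fun w _ => ?_
      split_ifs <;> simp
    · simp only [hc, if_false]
      symm
      refine Finset.sum_eq_zero fun z _ => Finset.sum_eq_zero fun w _ => ?_
      split_ifs <;> rfl
  have step2 : (∑ h : S, ∑ k : S, ∑ z : S, ∑ w : S,
        (if e * z * e = h then (if e * w * e = k then (if h * k = g then μ z * μ w else 0) else 0) else 0))
      = ∑ z : S, ∑ w : S, (if (e * z * e) * (e * w * e) = g then μ z * μ w else 0) := by
    -- reorder to z, w outside then collapse h, k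
    have hzw : ∀ h : S, (∑ k : S, ∑ z : S, ∑ w : S,
          (if e * z * e = h then (if e * w * e = k then (if h * k = g then μ z * μ w else 0) else 0) else 0))
        = ∑ z : S, ∑ w : S, ∑ k : S,
          (if e * z * e = h then (if e * w * e = k then (if h * k = g then μ z * μ w else 0) else 0) else 0) := by
      intro h
      rw [Finset.sum_comm]
      exact Finset.sum_congr rfl fun z _ => Finset.sum_comm
    rw [Finset.sum_congr rfl fun h _ => hzw h, Finset.sum_comm]
    refine Finset.sum_congr rfl fun z _ => ?_
    rw [Finset.sum_comm]
    refine Finset.sum_congr rfl fun w _ => ?_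
    -- now: ∑ h, ∑ k, ite (e*z*e = h) (ite (e*w*e = k) (ite (h*k=g) ...)) = ite ((eze)*(ewe) = g) ..
    have pull : ∀ x : S, (∑ k : S, if e * z * e = x then
          (if e * w * e = k then (if x * k = g then μ z * μ w else 0) else 0) else 0)
        = (if e * z * e = x then
            (∑ k : S, if e * w * e = k then (if x * k = g then μ z * μ w else 0) else 0) else 0) := by
      intro x; split_ifs
      · rfl
      · exact Finset.sum_const_zero
    rw [Finset.sum_congr rfl fun x _ => pull x]
    rw [Finset.sum_ite_eq Finset.univ (e * z * e)
      (fun h => ∑ k : S, (if e * w * e = k then (if h * k = g then μ z * μ w else 0) else 0))]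
    simp only [Finset.mem_univ, if_true]
    rw [Finset.sum_ite_eq Finset.univ (e * w * e)
      (fun k => (if (e * z * e) * k = g then μ z * μ w else 0))]
    simp
  have step3 : (∑ z : S, ∑ w : S, (if (e * z * e) * (e * w * e) = g then μ z * μ w else 0))
      = ∑ z : S, ∑ w : S, (if e * (z * e * w) * e = g then μ z * μ w else 0) := by
    refine Finset.sum_congr rfl fun z _ => Finset.sum_congr rfl fun w _ => ?_
    rw [hmul_e he]
  have step4 : (∑ z : S, ∑ w : S, (if e * (z * e * w) * e = g then μ z * μ w else 0))
      = ∑ u : S, (if e * u * e = g then Pker μ e u else 0) := by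
    have expand : ∀ z w : S, (if e * (z * e * w) * e = g then μ z * μ w else 0)
        = ∑ u : S, (if z * e * w = u then (if e * u * e = g then μ z * μ w else 0) else 0) := by
      intro z w
      rw [Finset.sum_ite_eq Finset.univ (z * e * w)
        (fun u => (if e * u * e = g then μ z * μ w else 0))]
      simp
    rw [Finset.sum_congr rfl fun z _ => Finset.sum_congr rfl fun w _ => expand z w]
    have hcomm : (∑ z : S, ∑ w : S, ∑ u : S,
          (if z * e * w = u then (if e * u * e = g then μ z * μ w else 0) else 0))
        = ∑ u : S, ∑ z : S, ∑ w : S,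
          (if z * e * w = u then (if e * u * e = g then μ z * μ w else 0) else 0) := by
      rw [Finset.sum_congr rfl fun z _ => Finset.sum_comm, Finset.sum_comm]
    rw [hcomm]
    refine Finset.sum_congr rfl fun u _ => ?_
    by_cases hg : e * u * e = g
    · simp only [hg, if_pos rfl, if_true]
      unfold Pker
      refine Finset.sum_congr rfl fun z _ => Finset.sum_congr rfl fun w _ => ?_
      split_ifs <;> rfl
    · simp only [hg, if_false]
      refine Finset.sum_eq_zero fun z _ => Finset.sum_eq_zero fun w _ => ?_
      split_ifs <;> rfl
  rw [step1, step2, step3, step4]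
  unfold nu
  refine Finset.sum_congr rfl fun u _ => ?_
  rw [← mu_eq_Pe μ hμ0 hμ1 hidem heK u]


noncomputable def Mset (μ : S → ℝ) (e : S) : Finset S :=
  Finset.univ.filter (fun x : S => ∃ z, 0 < μ z ∧ x = e * z * e)

lemma mem_Mset {μ : S → ℝ} {e : S} {x : S} :
    x ∈ Mset μ e ↔ ∃ z, 0 < μ z ∧ x = e * z * e := by simp [Mset]

lemma Mset_e {μ : S → ℝ} {e : S} (he : e * e = e) (heK : 0 < μ e) : e ∈ Mset μ e :=
  mem_Mset.mpr ⟨e, heK, by rw [he, he]⟩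

lemma Mset_idl {μ : S → ℝ} {e : S} (he : e * e = e) {g : S} (hg : g ∈ Mset μ e) : e * g = g := by
  obtain ⟨z, _, rfl⟩ := mem_Mset.mp hg
  rw [← mul_assoc, ← mul_assoc, he]

lemma Mset_idr {μ : S → ℝ} {e : S} (he : e * e = e) {g : S} (hg : g ∈ Mset μ e) : g * e = g := by
  obtain ⟨z, _, rfl⟩ := mem_Mset.mp hg
  rw [mul_assoc, he]

lemma Mset_pos (μ : S → ℝ) (hμ0 : ∀ s, 0 ≤ μ s) (hidem : semigroupConv μ μ = μ)
    {e : S} (heK : 0 < μ e) {g : S} (hg : g ∈ Mset μ e) : 0 < μ g := by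
  obtain ⟨z, hz, rfl⟩ := mem_Mset.mp hg
  exact supp_mul μ hμ0 hidem (supp_mul μ hμ0 hidem heK hz) heK

lemma Mset_mul (μ : S → ℝ) (hμ0 : ∀ s, 0 ≤ μ s) (hidem : semigroupConv μ μ = μ)
    {e : S} (he : e * e = e) (heK : 0 < μ e)
    {g h : S} (hg : g ∈ Mset μ e) (hh : h ∈ Mset μ e) : g * h ∈ Mset μ e := by
  obtain ⟨z1, hz1, rfl⟩ := mem_Mset.mp hg
  obtain ⟨z2, hz2, rfl⟩ := mem_Mset.mp hh
  exact mem_Mset.mpr ⟨z1 * e * z2,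
    supp_mul μ hμ0 hidem (supp_mul μ hμ0 hidem hz1 heK) hz2, hmul_e he z1 z2⟩

/-- In the finite monoid `Mset`, a left inverse is automatically a right inverse. -/
lemma Mset_flip (μ : S → ℝ) (hμ0 : ∀ s, 0 ≤ μ s) (hμ1 : ∑ s : S, μ s = 1)
    (hidem : semigroupConv μ μ = μ) {e : S} (he : e * e = e) (heK : 0 < μ e)
    {u c : S} (hu : u ∈ Mset μ e) (hc : c ∈ Mset μ e) (hcu : c * u = e) : u * c = e := by
  have hinj : Set.InjOn (fun m => u * m) (Mset μ e) := by
    intro m1 h1 m2 h2 hm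
    simp only at hm
    have h3 : c * (u * m1) = c * (u * m2) := by rw [hm]
    rwa [← mul_assoc, ← mul_assoc, hcu, Mset_idl he h1, Mset_idl he h2] at h3
  have himg : (Mset μ e).image (fun m => u * m) = Mset μ e := by
    apply Finset.eq_of_subset_of_card_le
    · intro x hx
      obtain ⟨m, hm, rfl⟩ := Finset.mem_image.mp hx
      exact Mset_mul μ hμ0 hidem he heK hu hm
    · rw [Finset.card_image_of_injOn hinj]
  have he_img : e ∈ (Mset μ e).image (fun m => u * m) := by
    rw [himg]; exact Mset_e he heK
  obtain ⟨m, hmM, hme0⟩ := Finset.mem_image.mp he_img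
  have hme : u * m = e := hme0
  have hmc : m = c := by
    have h4 : c * (u * m) = c * e := by rw [hme]
    rw [← mul_assoc, hcu, Mset_idl he hmM, Mset_idr he hc] at h4
    exact h4
  rw [← hmc]; exact hme

lemma Mset_inv (μ : S → ℝ) (hμ0 : ∀ s, 0 ≤ μ s) (hμ1 : ∑ s : S, μ s = 1)
    (hidem : semigroupConv μ μ = μ) {e : S} (he : e * e = e) (heK : 0 < μ e)
    {g : S} (hg : g ∈ Mset μ e) :
    ∃ g', g' ∈ Mset μ e ∧ g * g' = e ∧ g' * g = e := by
  have hgpos : 0 < μ g := Mset_pos μ hμ0 hidem heK hg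
  obtain ⟨a, b, ha, hb, hab⟩ := simple μ hμ0 hμ1 hidem hgpos heK
  have hee : ∀ x : S, e * (e * x) = e * x := fun x => by rw [← mul_assoc, he]
  have ha1 : e * a * e ∈ Mset μ e := mem_Mset.mpr ⟨a, ha, rfl⟩
  have hb1 : e * b * e ∈ Mset μ e := mem_Mset.mpr ⟨b, hb, rfl⟩
  have key : (e * a * e) * g * (e * b * e) = e := by
    obtain ⟨z, hz, hgz⟩ := mem_Mset.mp hg
    have h2 : (e * a * e) * g * (e * b * e) = e * ((a * g * b) * e) := by
      rw [hgz]
      simp only [mul_assoc, hee]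
    rw [h2, hab, he, he]
  -- right inverse: g * ((e*b*e) * (e*a*e)) = e
  have hu : g * (e * b * e) ∈ Mset μ e := Mset_mul μ hμ0 hidem he heK hg hb1
  have hau : (e * a * e) * (g * (e * b * e)) = e := by rw [← mul_assoc]; exact key
  have hright : (g * (e * b * e)) * (e * a * e) = e :=
    Mset_flip μ hμ0 hμ1 hidem he heK hu ha1 hau
  -- left inverse: ((e*b*e) * (e*a*e)) * g = e
  have hv : (e * a * e) * g ∈ Mset μ e := Mset_mul μ hμ0 hidem he heK ha1 hg
  have hvb : ((e * a * e) * g) * (e * b * e) = e := key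
  have hleft : (e * b * e) * ((e * a * e) * g) = e :=
    Mset_flip μ hμ0 hμ1 hidem he heK hb1 hv hvb
  refine ⟨(e * b * e) * (e * a * e),
    Mset_mul μ hμ0 hidem he heK hb1 ha1, ?_, ?_⟩
  · rw [← mul_assoc]; exact hright
  · rw [mul_assoc]; exact hleft

end Stmt11Aux

/-- Let `μ` be an idempotent probability on a finite semigroup `S`, with support
`K = 𝒮(μ)`, and `e ∈ K` an idempotent.  Then the pushforward of `μ` under the
`G`-coordinate map `z ↦ e*z*e` is the uniform (Haar) probability on the group
`G = eKe`. -/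
theorem stmt_11 {S : Type*} [Semigroup S] [Fintype S]
    (μ : S → ℝ) (hμ0 : ∀ s, 0 ≤ μ s) (hμ1 : ∑ s : S, μ s = 1)
    (hidem : semigroupConv μ μ = μ)
    (e : S) (he : e * e = e) (heK : 0 < μ e) :
    ∀ g : S,
      (∑ z : S, if e * z * e = g then μ z else 0) =
        if g ∈ Finset.univ.filter (fun x : S => ∃ z, 0 < μ z ∧ x = e * z * e) then
          (1 : ℝ) / (Finset.univ.filter (fun x : S => ∃ z, 0 < μ z ∧ x = e * z * e)).card
        else 0 := by
  intro g
  show Stmt11Aux.nu μ e g =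
    if g ∈ Stmt11Aux.Mset μ e then (1 : ℝ) / (Stmt11Aux.Mset μ e).card else 0
  have hν0 : ∀ g' : S, 0 ≤ Stmt11Aux.nu μ e g' := fun g' =>
    Finset.sum_nonneg fun z _ => Stmt11Aux.ite_nonneg' (hμ0 z)
  have hνpos : ∀ g' ∈ Stmt11Aux.Mset μ e, 0 < Stmt11Aux.nu μ e g' := by
    intro g' hg'
    obtain ⟨z, hz, rfl⟩ := Stmt11Aux.mem_Mset.mp hg'
    have hle : μ z ≤ Stmt11Aux.nu μ e (e * z * e) := by
      have := Finset.single_le_sum (f := fun w => if e * w * e = e * z * e then μ w else 0)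
        (fun w _ => Stmt11Aux.ite_nonneg' (hμ0 w)) (Finset.mem_univ z)
      simpa [Stmt11Aux.nu] using this
    linarith
  have hνzero : ∀ g' : S, g' ∉ Stmt11Aux.Mset μ e → Stmt11Aux.nu μ e g' = 0 := by
    intro g' hg'
    refine Finset.sum_eq_zero fun z _ => ?_
    split_ifs with hz
    · by_contra hne
      have hzpos : 0 < μ z := lt_of_le_of_ne (hμ0 z) (Ne.symm hne)
      exact hg' (Stmt11Aux.mem_Mset.mpr ⟨z, hzpos, hz.symm⟩)
    · rfl
  have hνsum : ∑ g' : S, Stmt11Aux.nu μ e g' = 1 := by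
    unfold Stmt11Aux.nu
    rw [Finset.sum_comm]
    have hin : ∀ z : S, (∑ g' : S, if e * z * e = g' then μ z else 0) = μ z := by
      intro z
      rw [Finset.sum_ite_eq Finset.univ (e * z * e) (fun _ => μ z)]
      simp
    rw [Finset.sum_congr rfl fun z _ => hin z, hμ1]
  have hνsumM : ∑ g' ∈ Stmt11Aux.Mset μ e, Stmt11Aux.nu μ e g' = 1 := by
    rw [← hνsum]
    exact Finset.sum_subset (Finset.subset_univ _) (fun x _ hx => hνzero x hx)
  have hMe : e ∈ Stmt11Aux.Mset μ e := Stmt11Aux.Mset_e he heK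
  obtain ⟨g0, hg0M, hmax⟩ :=
    Finset.exists_max_image (Stmt11Aux.Mset μ e) (Stmt11Aux.nu μ e) ⟨e, hMe⟩
  have hmax' : ∀ h : S, Stmt11Aux.nu μ e h ≤ Stmt11Aux.nu μ e g0 := by
    intro h
    by_cases hh : h ∈ Stmt11Aux.Mset μ e
    · exact hmax h hh
    · rw [hνzero h hh]; exact hν0 g0
  have hinner : ∀ h, h ∈ Stmt11Aux.Mset μ e → ∀ h', h' ∈ Stmt11Aux.Mset μ e →
      h * h' = e → h' * h = e →
      (∑ k : S, if h * k = g0 then Stmt11Aux.nu μ e h * Stmt11Aux.nu μ e k else 0)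
        = Stmt11Aux.nu μ e h * Stmt11Aux.nu μ e (h' * g0) := by
    intro h hhM h' hh'M hhh' hh'h
    have hpt : ∀ k : S, (if h * k = g0 then Stmt11Aux.nu μ e h * Stmt11Aux.nu μ e k else 0)
        = (if h' * g0 = k then Stmt11Aux.nu μ e h * Stmt11Aux.nu μ e k else 0) := by
      intro k
      by_cases hk1 : h * k = g0
      · by_cases hk2 : h' * g0 = k
        · simp [hk1, hk2]
        · have hknM : k ∉ Stmt11Aux.Mset μ e := by
            intro hkM
            exact hk2 (by rw [← hk1, ← mul_assoc, hh'h, Stmt11Aux.Mset_idl he hkM])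
          simp [hk1, hk2, hνzero k hknM]
      · by_cases hk2 : h' * g0 = k
        · exact absurd (by rw [← hk2, ← mul_assoc, hhh', Stmt11Aux.Mset_idl he hg0M]) hk1
        · simp [hk1, hk2]
    rw [Finset.sum_congr rfl fun k _ => hpt k]
    rw [Finset.sum_ite_eq Finset.univ (h' * g0)
      (fun k => Stmt11Aux.nu μ e h * Stmt11Aux.nu μ e k)]
    simp
  have hfg : ∀ h : S,
      (∑ k : S, if h * k = g0 then Stmt11Aux.nu μ e h * Stmt11Aux.nu μ e k else 0)
        ≤ (if h ∈ Stmt11Aux.Mset μ e then Stmt11Aux.nu μ e h * Stmt11Aux.nu μ e g0 else 0) := by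
    intro h
    by_cases hh : h ∈ Stmt11Aux.Mset μ e
    · obtain ⟨h', hh'M, h1, h2⟩ := Stmt11Aux.Mset_inv μ hμ0 hμ1 hidem he heK hh
      rw [hinner h hh h' hh'M h1 h2, if_pos hh]
      exact mul_le_mul_of_nonneg_left (hmax' _) (hν0 h)
    · rw [if_neg hh]
      refine le_of_eq (Finset.sum_eq_zero fun k _ => ?_)
      split_ifs
      · rw [hνzero h hh, zero_mul]
      · rfl
  have hsums : (∑ h : S, ∑ k : S, if h * k = g0 then Stmt11Aux.nu μ e h * Stmt11Aux.nu μ e k else 0)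
      = ∑ h : S, (if h ∈ Stmt11Aux.Mset μ e then Stmt11Aux.nu μ e h * Stmt11Aux.nu μ e g0 else 0) := by
    rw [Stmt11Aux.nu_idem μ hμ0 hμ1 hidem he heK g0]
    rw [Finset.sum_ite_mem, Finset.univ_inter, ← Finset.sum_mul, hνsumM, one_mul]
  have heqterm := (Finset.sum_eq_sum_iff_of_le (fun h (_ : h ∈ Finset.univ) => hfg h)).mp hsums
  have hνconst : ∀ k ∈ Stmt11Aux.Mset μ e, Stmt11Aux.nu μ e k = Stmt11Aux.nu μ e g0 := by
    intro k hkM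
    obtain ⟨k', hk'M, hkk', hk'k⟩ := Stmt11Aux.Mset_inv μ hμ0 hμ1 hidem he heK hkM
    obtain ⟨g0', hg0'M, hgg', hg'g⟩ := Stmt11Aux.Mset_inv μ hμ0 hμ1 hidem he heK hg0M
    have hhM : g0 * k' ∈ Stmt11Aux.Mset μ e :=
      Stmt11Aux.Mset_mul μ hμ0 hidem he heK hg0M hk'M
    have hh'M : k * g0' ∈ Stmt11Aux.Mset μ e :=
      Stmt11Aux.Mset_mul μ hμ0 hidem he heK hkM hg0'M
    have h1 : (g0 * k') * (k * g0') = e := by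
      rw [mul_assoc, ← mul_assoc k' k, hk'k, Stmt11Aux.Mset_idl he hg0'M, hgg']
    have h2 : (k * g0') * (g0 * k') = e := by
      rw [mul_assoc, ← mul_assoc g0' g0, hg'g, Stmt11Aux.Mset_idl he hk'M, hkk']
    have hfeq := heqterm (g0 * k') (Finset.mem_univ _)
    rw [hinner _ hhM _ hh'M h1 h2, if_pos hhM] at hfeq
    have hcancel : Stmt11Aux.nu μ e ((k * g0') * g0) = Stmt11Aux.nu μ e g0 :=
      mul_left_cancel₀ (ne_of_gt (hνpos _ hhM)) hfeq
    rw [mul_assoc, hg'g, Stmt11Aux.Mset_idr he hkM] at hcancel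
    exact hcancel
  have hcardpos : 0 < (Stmt11Aux.Mset μ e).card := Finset.card_pos.mpr ⟨e, hMe⟩
  have hcne : ((Stmt11Aux.Mset μ e).card : ℝ) ≠ 0 := by
    exact_mod_cast hcardpos.ne'
  have hval : Stmt11Aux.nu μ e g0 = 1 / ((Stmt11Aux.Mset μ e).card : ℝ) := by
    have hsc : ∑ h ∈ Stmt11Aux.Mset μ e, Stmt11Aux.nu μ e h
        = ((Stmt11Aux.Mset μ e).card : ℝ) * Stmt11Aux.nu μ e g0 := by
      rw [Finset.sum_congr rfl (fun h hh => hνconst h hh), Finset.sum_const, nsmul_eq_mul]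
    rw [hνsumM] at hsc
    rw [eq_div_iff hcne]
    linarith
  by_cases hgM : g ∈ Stmt11Aux.Mset μ e
  · rw [if_pos hgM, hνconst g hgM, hval]
  · rw [if_neg hgM]
    exact hνzero g hgM
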